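/- For every real number t and all nonnegative integers m and n, the mixed partial derivative ∂_x^m ∂_y^n [ (e^{−x} + e^{−y} − 1)^{(−1−t)/2} · (e^x + e^y − 1)^{(1−t)/2} ] evaluated at (x,y) = (0,0) equals Σ_{m'=0}^{m} Σ_{ℓ₁=0}^{m'} Σ_{ℓ₂=0}^{m−m'} C(m,m') · S(m',ℓ₁) · S(m−m',ℓ₂) · (−1)^{m−m'} · ((1−t)/2)_{ℓ₁} · ((−1−t)/2)_{ℓ₂} · (1 − ℓ₁ + ℓ₂)^n, where C(m,m') is the binomial coefficient, (s)_ℓ = s(s−1)⋯(s−ℓ+1) is the falling factorial (with (s)_0 = 1), and S(a,ℓ) is the Stirling number of the second kind. -/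

import Mathlib

/-- Stirling numbers of the second kind: `stirling2 n k` is the number of
partitions of an `n`-element set into `k` nonempty blocks. -/
def stirling2 : ℕ → ℕ → ℕ
  | 0, 0 => 1
  | 0, _+1 => 0
  | _+1, 0 => 0
  | n+1, k+1 => (k + 1) * stirling2 n (k + 1) + stirling2 n k

/-- The falling factorial `(s)_ℓ = s (s-1) ⋯ (s - ℓ + 1)`, with `(s)_0 = 1`. -/
def fallingFactorial (s : ℝ) (l : ℕ) : ℝ := ∏ i ∈ Finset.range l, (s - i)

lemma stirling2_eq_zero : ∀ {n k : ℕ}, n < k → stirling2 n k = 0 := by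
  intro n
  induction n with
  | zero => intro k hk; match k, hk with | k+1, _ => rfl
  | succ n ih =>
    intro k hk
    match k, hk with
    | k+1, hk =>
      show (k + 1) * stirling2 n (k + 1) + stirling2 n k = 0
      rw [ih (by omega), ih (by omega)]
      ring

lemma stirling2_succ_zero (j : ℕ) : stirling2 (j+1) 0 = 0 := rfl

lemma fallingFactorial_succ (s : ℝ) (l : ℕ) :
    fallingFactorial s (l + 1) = fallingFactorial s l * (s - l) := by
  rw [fallingFactorial, Finset.prod_range_succ]; rfl

/-- The key recombination identity behind Faà di Bruno for `g ∘ exp`. -/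
lemma stirling_recomb (s : ℝ) (j : ℕ) (T : ℕ → ℝ) :
    ∑ l ∈ Finset.range (j+1), (stirling2 j l : ℝ) * fallingFactorial s l *
        ((l : ℝ) * T l + (s - l) * T (l+1)) =
      ∑ l ∈ Finset.range (j+2), (stirling2 (j+1) l : ℝ) * fallingFactorial s l * T l := by
  have expand : ∀ l ∈ Finset.range (j+1),
      (stirling2 j l : ℝ) * fallingFactorial s l * ((l : ℝ) * T l + (s - l) * T (l+1))
      = (l : ℝ) * stirling2 j l * fallingFactorial s l * T l
        + (stirling2 j l : ℝ) * fallingFactorial s (l+1) * T (l+1) := by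
    intro l _; rw [fallingFactorial_succ]; ring
  rw [Finset.sum_congr rfl expand, Finset.sum_add_distrib]
  have e1 : (∑ l ∈ Finset.range (j+1), (l : ℝ) * stirling2 j l * fallingFactorial s l * T l)
      = ∑ l ∈ Finset.range (j+2), (l : ℝ) * stirling2 j l * fallingFactorial s l * T l := by
    rw [Finset.sum_range_succ (fun l => (l : ℝ) * stirling2 j l * fallingFactorial s l * T l) (j+1),
      stirling2_eq_zero (by omega)]
    simp
  have e2 : (∑ l ∈ Finset.range (j+1), (stirling2 j l : ℝ) * fallingFactorial s (l+1) * T (l+1))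
      = ∑ l ∈ Finset.range (j+2),
          (if l = 0 then 0 else (stirling2 j (l-1) : ℝ) * fallingFactorial s l * T l) := by
    rw [Finset.sum_range_succ' (fun l => if l = 0 then (0:ℝ)
      else (stirling2 j (l-1):ℝ) * fallingFactorial s l * T l) (j+1)]
    simp
  rw [e1, e2, ← Finset.sum_add_distrib]
  apply Finset.sum_congr rfl
  intro l _
  match l with
  | 0 => simp [stirling2_succ_zero]
  | l+1 =>
    simp only [Nat.add_sub_cancel, if_neg (Nat.succ_ne_zero l)]
    show _ = (((l + 1) * stirling2 j (l + 1) + stirling2 j l : ℕ) : ℝ) * fallingFactorial s (l+1) * T (l+1)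
    push_cast
    ring


/-- If `F j` is a chain of functions each the derivative of the previous on an open set `U`,
then the `n`-th iterated derivative of `F 0` at any point of `U` is `F n`. -/
lemma iteratedDeriv_of_chain {F : ℕ → ℝ → ℝ} {U : Set ℝ} (hU : IsOpen U)
    (h : ∀ j, ∀ y ∈ U, HasDerivAt (F j) (F (j+1) y) y) :
    ∀ n, ∀ y ∈ U, iteratedDeriv n (F 0) y = F n y := by
  intro n
  induction n with
  | zero => intro y hy; simp
  | succ n ih =>
    intro y hy
    rw [iteratedDeriv_succ]
    have hev : iteratedDeriv n (F 0) =ᶠ[nhds y] F n :=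
      Filter.eventuallyEq_of_mem (hU.mem_nhds hy) ih
    rw [hev.deriv_eq]
    exact (h n y hy).deriv

noncomputable def hseq (s c : ℝ) (j : ℕ) (z : ℝ) : ℝ :=
  ∑ l ∈ Finset.range (j+1), (stirling2 j l : ℝ) * fallingFactorial s l *
    (Real.exp (l * z) * (c + Real.exp z) ^ (s - l))

lemma hseq_hasDerivAt (s c : ℝ) (j : ℕ) {z : ℝ} (hz : 0 < c + Real.exp z) :
    HasDerivAt (hseq s c j) (hseq s c (j+1) z) z := by
  have key : HasDerivAt (hseq s c j)
      (∑ l ∈ Finset.range (j+1), (stirling2 j l : ℝ) * fallingFactorial s l *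
        ((l : ℝ) * (Real.exp (l * z) * (c + Real.exp z) ^ (s - l))
          + (s - l) * (Real.exp ((l+1 : ℕ) * z) * (c + Real.exp z) ^ (s - (l+1 : ℕ))))) z := by
    apply HasDerivAt.fun_sum
    intro l _
    have h1 : HasDerivAt (fun z : ℝ => Real.exp (l * z)) (Real.exp (l * z) * l) z := by
      have : HasDerivAt (fun z : ℝ => (l : ℝ) * z) l z := by
        simpa using (hasDerivAt_id z).const_mul (l : ℝ)
      exact this.exp
    have h2 : HasDerivAt (fun z : ℝ => (c + Real.exp z) ^ (s - l))
        (Real.exp z * (s - l) * (c + Real.exp z) ^ (s - l - 1)) z := by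
      have inner : HasDerivAt (fun z : ℝ => c + Real.exp z) (Real.exp z) z :=
        (Real.hasDerivAt_exp z).const_add c
      exact inner.rpow_const (Or.inl (ne_of_gt hz))
    have := (h1.mul h2).const_mul ((stirling2 j l : ℝ) * fallingFactorial s l)
    convert this using 1
    rfl
    rfl
    have e1 : Real.exp (((l:ℕ)+1 : ℕ) * z) = Real.exp (l * z) * Real.exp z := by
      rw [← Real.exp_add]; push_cast; ring_nf
    have e2 : s - ((l:ℕ)+1 : ℕ) = s - l - 1 := by push_cast; ring
    rw [e1, e2]
    ring
  have := stirling_recomb s j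
    (fun l => Real.exp (l * z) * (c + Real.exp z) ^ (s - l))
  rw [this] at key
  exact key



lemma hseq_zeroth (s c : ℝ) (x : ℝ) : hseq s c 0 x = (c + Real.exp x) ^ s := by
  simp [hseq, stirling2, fallingFactorial]

lemma hseq_at_zero (s c : ℝ) (j : ℕ) :
    hseq s c j 0 = ∑ l ∈ Finset.range (j+1),
      (stirling2 j l : ℝ) * fallingFactorial s l * (c + 1) ^ (s - l) := by
  simp [hseq, Real.exp_zero]

/-- Pascal-style recombination for the Leibniz rule. -/
lemma choose_recomb (m : ℕ) (f g : ℕ → ℝ) :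
    ∑ j ∈ Finset.range (m+1), (m.choose j : ℝ) * (f (j+1) * g (m-j) + f j * g (m-j+1)) =
      ∑ j ∈ Finset.range (m+2), ((m+1).choose j : ℝ) * (f j * g (m+1-j)) := by
  have split : ∑ j ∈ Finset.range (m+1), (m.choose j : ℝ) * (f (j+1) * g (m-j) + f j * g (m-j+1))
      = (∑ j ∈ Finset.range (m+1), (m.choose j : ℝ) * (f (j+1) * g (m-j)))
        + ∑ j ∈ Finset.range (m+1), (m.choose j : ℝ) * (f j * g (m+1-j)) := by
    rw [← Finset.sum_add_distrib]
    apply Finset.sum_congr rfl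
    intro j hj
    have : m - j + 1 = m + 1 - j := by
      have := Finset.mem_range.mp hj; omega
    rw [this]; ring
  rw [split]
  have e2 : ∑ j ∈ Finset.range (m+1), (m.choose j : ℝ) * (f j * g (m+1-j))
      = ∑ j ∈ Finset.range (m+2), (m.choose j : ℝ) * (f j * g (m+1-j)) := by
    rw [Finset.sum_range_succ (fun j => (m.choose j : ℝ) * (f j * g (m+1-j))) (m+1),
      Nat.choose_succ_self]
    simp
  rw [e2]
  rw [Finset.sum_range_succ' (fun j => ((m+1).choose j : ℝ) * (f j * g (m+1-j))) (m+1),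
    Finset.sum_range_succ' (fun j => (m.choose j : ℝ) * (f j * g (m+1-j))) (m+1)]
  simp only [Nat.choose_zero_right, Nat.cast_one, Nat.sub_zero]
  rw [← add_assoc, ← Finset.sum_add_distrib]
  congr 1
  apply Finset.sum_congr rfl
  intro j _
  have : (m+1).choose (j+1) = m.choose j + m.choose (j+1) := Nat.choose_succ_succ m j
  rw [this]
  have : m + 1 - (j + 1) = m - j := by omega
  rw [this]
  push_cast
  ring

lemma leibniz_chain {f g : ℕ → ℝ → ℝ} {U : Set ℝ}
    (hf : ∀ j, ∀ x ∈ U, HasDerivAt (f j) (f (j+1) x) x)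
    (hg : ∀ j, ∀ x ∈ U, HasDerivAt (g j) (g (j+1) x) x) (m : ℕ) :
    ∀ x ∈ U, HasDerivAt (fun x => ∑ j ∈ Finset.range (m+1), (m.choose j : ℝ) * (f j x * g (m-j) x))
      (∑ j ∈ Finset.range (m+2), ((m+1).choose j : ℝ) * (f j x * g (m+1-j) x)) x := by
  intro x hx
  have key : HasDerivAt (fun x => ∑ j ∈ Finset.range (m+1), (m.choose j : ℝ) * (f j x * g (m-j) x))
      (∑ j ∈ Finset.range (m+1), (m.choose j : ℝ) *
        (f (j+1) x * g (m-j) x + f j x * g (m-j+1) x)) x := by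
    apply HasDerivAt.fun_sum
    intro j _
    exact (((hf j x hx).mul (hg (m-j) x hx)).const_mul _)
  rw [choose_recomb m (fun j => f j x) (fun j => g j x)] at key
  exact key


section Symmetry
open ContDiff

lemma two_le_infty : (2 : WithTop ℕ∞) ≤ ∞ := by
  rw [show (2 : WithTop ℕ∞) = ((2 : ℕ∞) : WithTop ℕ∞) by rfl]
  exact WithTop.coe_le_coe.mpr le_top

lemma one_le_infty : (1 : WithTop ℕ∞) ≤ ∞ := by
  rw [show (1 : WithTop ℕ∞) = ((1 : ℕ∞) : WithTop ℕ∞) by rfl]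
  exact WithTop.coe_le_coe.mpr le_top


variable {U : Set (ℝ × ℝ)}

/-- Directional partial derivative operator. -/
noncomputable def pdv (v : ℝ × ℝ) (f : ℝ × ℝ → ℝ) (p : ℝ × ℝ) : ℝ := fderiv ℝ f p v

lemma pdv_smooth (hU : IsOpen U) {f : ℝ × ℝ → ℝ} (hf : ContDiffOn ℝ ∞ f U) (v : ℝ × ℝ) :
    ContDiffOn ℝ ∞ (pdv v f) U := by
  have h1 : ContDiffOn ℝ ∞ (fderiv ℝ f) U :=
    ((contDiffOn_infty_iff_fderiv_of_isOpen hU).mp hf).2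
  have h2 : ContDiff ℝ ∞ (fun L : (ℝ × ℝ) →L[ℝ] ℝ => L v) :=
    (ContinuousLinearMap.apply ℝ ℝ v).contDiff
  exact h2.comp_contDiffOn h1

lemma pdv_iter_smooth (hU : IsOpen U) {f : ℝ × ℝ → ℝ} (hf : ContDiffOn ℝ ∞ f U) (v : ℝ × ℝ) :
    ∀ k, ContDiffOn ℝ ∞ ((pdv v)^[k] f) U := by
  intro k
  induction k with
  | zero => exact hf
  | succ k ih => rw [Function.iterate_succ_apply']; exact pdv_smooth hU ih v

lemma pdv_congr_on (hU : IsOpen U) {f₁ f₂ : ℝ × ℝ → ℝ} (h : ∀ q ∈ U, f₁ q = f₂ q) (v : ℝ × ℝ) :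
    ∀ q ∈ U, pdv v f₁ q = pdv v f₂ q := by
  intro q hq
  have : f₁ =ᶠ[nhds q] f₂ := Filter.eventuallyEq_of_mem (hU.mem_nhds hq) h
  simp only [pdv, this.fderiv_eq]

lemma pdv_iter_congr_on (hU : IsOpen U) {f₁ f₂ : ℝ × ℝ → ℝ} (h : ∀ q ∈ U, f₁ q = f₂ q)
    (v : ℝ × ℝ) : ∀ k, ∀ q ∈ U, (pdv v)^[k] f₁ q = (pdv v)^[k] f₂ q := by
  intro k
  induction k with
  | zero => exact h
  | succ k ih =>
    rw [Function.iterate_succ_apply', Function.iterate_succ_apply']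
    exact pdv_congr_on hU ih v

/-- Clairaut's theorem for the directional partial derivative operators. -/
lemma pdv_comm (hU : IsOpen U) {f : ℝ × ℝ → ℝ} (hf : ContDiffOn ℝ ∞ f U) (v w : ℝ × ℝ)
    {p : ℝ × ℝ} (hp : p ∈ U) : pdv v (pdv w f) p = pdv w (pdv v f) p := by
  have hsym : IsSymmSndFDerivAt ℝ f p :=
    (hf.contDiffAt (hU.mem_nhds hp)).isSymmSndFDerivAt (by rw [minSmoothness_of_isRCLikeNormedField]; exact two_le_infty)
  have key : ∀ v w : ℝ × ℝ, pdv v (pdv w f) p = fderiv ℝ (fderiv ℝ f) p v w := by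
    intro v w
    have hdf : DifferentiableAt ℝ (fderiv ℝ f) p := by
      have h1 : ContDiffOn ℝ ∞ (fderiv ℝ f) U :=
        ((contDiffOn_infty_iff_fderiv_of_isOpen hU).mp hf).2
      exact (h1.contDiffAt (hU.mem_nhds hp)).differentiableAt (by simp)
    have hcomp : pdv w f = (fun L : (ℝ × ℝ) →L[ℝ] ℝ => L w) ∘ (fderiv ℝ f) := rfl
    have : fderiv ℝ (pdv w f) p
        = (ContinuousLinearMap.apply ℝ ℝ w).comp (fderiv ℝ (fderiv ℝ f) p) := by
      rw [hcomp, show (fun L : (ℝ × ℝ) →L[ℝ] ℝ => L w) = (ContinuousLinearMap.apply ℝ ℝ w) from rfl,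
        fderiv_comp p (ContinuousLinearMap.apply ℝ ℝ w).differentiableAt hdf,
        ContinuousLinearMap.fderiv]
    show fderiv ℝ (pdv w f) p v = _
    rw [this]
    rfl
  rw [key v w, key w v]
  exact hsym v w


lemma swap_one_iter (hU : IsOpen U) {f : ℝ × ℝ → ℝ} (hf : ContDiffOn ℝ ∞ f U)
    (u w : ℝ × ℝ) (m : ℕ) : ∀ q ∈ U, (pdv u)^[m] (pdv w f) q = pdv w ((pdv u)^[m] f) q := by
  induction m generalizing f with
  | zero => intro q hq; rfl
  | succ m ih =>
    intro q hq
    rw [Function.iterate_succ_apply]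
    have step1 : (pdv u)^[m] (pdv u (pdv w f)) q = (pdv u)^[m] (pdv w (pdv u f)) q :=
      pdv_iter_congr_on hU (fun q hq => pdv_comm hU hf u w hq) u m q hq
    rw [step1, ih (pdv_smooth hU hf u) q hq, ← Function.iterate_succ_apply]

lemma swap_iter (hU : IsOpen U) {f : ℝ × ℝ → ℝ} (hf : ContDiffOn ℝ ∞ f U)
    (u w : ℝ × ℝ) (m n : ℕ) :
    ∀ q ∈ U, (pdv u)^[m] ((pdv w)^[n] f) q = (pdv w)^[n] ((pdv u)^[m] f) q := by
  induction n generalizing f with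
  | zero => intro q hq; rfl
  | succ n ih =>
    intro q hq
    rw [Function.iterate_succ_apply]
    rw [ih (pdv_smooth hU hf w) q hq]
    have : ∀ q ∈ U, (pdv u)^[m] (pdv w f) q = pdv w ((pdv u)^[m] f) q :=
      swap_one_iter hU hf u w m
    rw [pdv_iter_congr_on hU this w n q hq, ← Function.iterate_succ_apply]

/-- Derivative of a vertical section. -/
lemma deriv_sect_y (hU : IsOpen U) {g : ℝ × ℝ → ℝ} (hg : ContDiffOn ℝ ∞ g U)
    {x y : ℝ} (h : (x, y) ∈ U) :
    deriv (fun y' => g (x, y')) y = pdv (0, 1) g (x, y) := by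
  have hd : DifferentiableAt ℝ g (x, y) :=
    (hg.contDiffAt (hU.mem_nhds h)).differentiableAt (by simp)
  have hc : HasDerivAt (fun y' : ℝ => (x, y')) ((0 : ℝ), (1 : ℝ)) y :=
    (hasDerivAt_const y x).prodMk (hasDerivAt_id y)
  exact (hd.hasFDerivAt.comp_hasDerivAt y hc).deriv

lemma deriv_sect_x (hU : IsOpen U) {g : ℝ × ℝ → ℝ} (hg : ContDiffOn ℝ ∞ g U)
    {x y : ℝ} (h : (x, y) ∈ U) :
    deriv (fun x' => g (x', y)) x = pdv (1, 0) g (x, y) := by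
  have hd : DifferentiableAt ℝ g (x, y) :=
    (hg.contDiffAt (hU.mem_nhds h)).differentiableAt (by simp)
  have hc : HasDerivAt (fun x' : ℝ => (x', y)) ((1 : ℝ), (0 : ℝ)) x :=
    (hasDerivAt_id x).prodMk (hasDerivAt_const x y)
  exact (hd.hasFDerivAt.comp_hasDerivAt x hc).deriv

lemma sect_y_iter (hU : IsOpen U) {g : ℝ × ℝ → ℝ} (hg : ContDiffOn ℝ ∞ g U) (n : ℕ) :
    ∀ x y, (x, y) ∈ U → iteratedDeriv n (fun y' => g (x, y')) y = (pdv (0, 1))^[n] g (x, y) := by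
  induction n with
  | zero => intro x y _; simp
  | succ n ih =>
    intro x y hxy
    rw [iteratedDeriv_succ]
    have hopen : IsOpen {y' : ℝ | (x, y') ∈ U} :=
      hU.preimage (by continuity : Continuous (fun y' : ℝ => (x, y')))
    have hev : iteratedDeriv n (fun y' => g (x, y')) =ᶠ[nhds y]
        (fun y' => (pdv (0, 1))^[n] g (x, y')) :=
      Filter.eventuallyEq_of_mem (hopen.mem_nhds hxy) (fun y' hy' => ih x y' hy')
    rw [hev.deriv_eq, deriv_sect_y hU (pdv_iter_smooth hU hg _ n) hxy]
    exact (Function.iterate_succ_apply' (pdv (0,1)) n g ▸ rfl)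

lemma sect_x_iter (hU : IsOpen U) {g : ℝ × ℝ → ℝ} (hg : ContDiffOn ℝ ∞ g U) (m : ℕ) :
    ∀ x y, (x, y) ∈ U → iteratedDeriv m (fun x' => g (x', y)) x = (pdv (1, 0))^[m] g (x, y) := by
  induction m with
  | zero => intro x y _; simp
  | succ m ih =>
    intro x y hxy
    rw [iteratedDeriv_succ]
    have hopen : IsOpen {x' : ℝ | (x', y) ∈ U} :=
      hU.preimage (by continuity : Continuous (fun x' : ℝ => (x', y)))
    have hev : iteratedDeriv m (fun x' => g (x', y)) =ᶠ[nhds x]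
        (fun x' => (pdv (1, 0))^[m] g (x', y)) :=
      Filter.eventuallyEq_of_mem (hopen.mem_nhds hxy) (fun x' hx' => ih x' y hx')
    rw [hev.deriv_eq, deriv_sect_x hU (pdv_iter_smooth hU hg _ m) hxy]
    exact (Function.iterate_succ_apply' (pdv (1,0)) m g ▸ rfl)

lemma iteratedDeriv_congr_on {S : Set ℝ} (hS : IsOpen S) {f₁ f₂ : ℝ → ℝ}
    (h : ∀ x ∈ S, f₁ x = f₂ x) (m : ℕ) :
    ∀ x ∈ S, iteratedDeriv m f₁ x = iteratedDeriv m f₂ x := by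
  induction m with
  | zero => simpa using h
  | succ m ih =>
    intro x hx
    rw [iteratedDeriv_succ, iteratedDeriv_succ]
    exact (Filter.eventuallyEq_of_mem (hS.mem_nhds hx) ih).deriv_eq

/-- Symmetry of iterated mixed partial derivatives for a smooth function on an open set. -/
lemma mixed_swap (hU : IsOpen U) {f : ℝ × ℝ → ℝ} (hf : ContDiffOn ℝ ∞ f U)
    {a b : ℝ} (hab : (a, b) ∈ U) (m n : ℕ) :
    iteratedDeriv m (fun x => iteratedDeriv n (fun y => f (x, y)) b) a
      = iteratedDeriv n (fun y => iteratedDeriv m (fun x => f (x, y)) a) b := by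
  have hSx : IsOpen {x : ℝ | (x, b) ∈ U} :=
    hU.preimage (by continuity : Continuous (fun x : ℝ => (x, b)))
  have hSy : IsOpen {y : ℝ | (a, y) ∈ U} :=
    hU.preimage (by continuity : Continuous (fun y : ℝ => (a, y)))
  have step1 : iteratedDeriv m (fun x => iteratedDeriv n (fun y => f (x, y)) b) a
      = iteratedDeriv m (fun x => (pdv (0, 1))^[n] f (x, b)) a :=
    iteratedDeriv_congr_on hSx (fun x hx => sect_y_iter hU hf n x b hx) m a hab
  have step2 : iteratedDeriv m (fun x => (pdv (0, 1))^[n] f (x, b)) a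
      = (pdv (1, 0))^[m] ((pdv (0, 1))^[n] f) (a, b) :=
    sect_x_iter hU (pdv_iter_smooth hU hf _ n) m a b hab
  have step3 : (pdv (1, 0))^[m] ((pdv (0, 1))^[n] f) (a, b)
      = (pdv (0, 1))^[n] ((pdv (1, 0))^[m] f) (a, b) :=
    swap_iter hU hf _ _ m n _ hab
  have step4 : (pdv (0, 1))^[n] ((pdv (1, 0))^[m] f) (a, b)
      = iteratedDeriv n (fun y => (pdv (1, 0))^[m] f (a, y)) b :=
    (sect_y_iter hU (pdv_iter_smooth hU hf _ m) n a b hab).symm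
  have step5 : iteratedDeriv n (fun y => (pdv (1, 0))^[m] f (a, y)) b
      = iteratedDeriv n (fun y => iteratedDeriv m (fun x => f (x, y)) a) b :=
    iteratedDeriv_congr_on hSy (fun y hy => (sect_x_iter hU hf m a y hy).symm) n b hab
  rw [step1, step2, step3, step4, step5]

end Symmetry


section Main

open Real ContDiff

variable (t : ℝ)

/-- The function under consideration, as a function on `ℝ × ℝ`. -/
noncomputable def Fn (t : ℝ) : ℝ × ℝ → ℝ := fun p =>
  (Real.exp (-p.1) + Real.exp (-p.2) - 1) ^ ((-1 - t) / 2) *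
    (Real.exp p.1 + Real.exp p.2 - 1) ^ ((1 - t) / 2)

def Vset : Set (ℝ × ℝ) :=
  {p | 0 < Real.exp (-p.1) + Real.exp (-p.2) - 1 ∧ 0 < Real.exp p.1 + Real.exp p.2 - 1}

lemma Vset_open : IsOpen Vset := by
  have hc1 : Continuous (fun p : ℝ × ℝ => Real.exp (-p.1) + Real.exp (-p.2) - 1) := by fun_prop
  have hc2 : Continuous (fun p : ℝ × ℝ => Real.exp p.1 + Real.exp p.2 - 1) := by fun_prop
  exact (isOpen_lt continuous_const hc1).inter (isOpen_lt continuous_const hc2)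

lemma origin_mem_Vset : ((0 : ℝ), (0 : ℝ)) ∈ Vset := by
  constructor <;> simp [Real.exp_zero]

lemma Fn_smooth : ContDiffOn ℝ ∞ (Fn t) Vset := by
  intro p hp
  apply ContDiffAt.contDiffWithinAt
  have h1 : ContDiffAt ℝ ∞ (fun p : ℝ × ℝ => Real.exp (-p.1) + Real.exp (-p.2) - 1) p := by
    apply ContDiff.contDiffAt
    fun_prop
  have h2 : ContDiffAt ℝ ∞ (fun p : ℝ × ℝ => Real.exp p.1 + Real.exp p.2 - 1) p := by
    apply ContDiff.contDiffAt
    fun_prop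
  exact (h1.rpow_const_of_ne hp.1.ne').mul (h2.rpow_const_of_ne hp.2.ne')

/-- The inner `x`-derivative, valid for every `y`. -/
lemma inner_formula (m : ℕ) (y : ℝ) :
    iteratedDeriv m (fun x : ℝ => Fn t (x, y)) 0 =
      ∑ j ∈ Finset.range (m + 1), (m.choose j : ℝ) *
        (hseq ((1 - t)/2) (Real.exp y - 1) j 0 *
          ((-1 : ℝ) ^ (m - j) * hseq ((-1 - t)/2) (Real.exp (-y) - 1) (m - j) 0)) := by
  set β := (1 - t)/2
  set α := (-1 - t)/2
  set c1 := Real.exp y - 1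
  set c2 := Real.exp (-y) - 1
  set Uy : Set ℝ := {x | 0 < c1 + Real.exp x ∧ 0 < c2 + Real.exp (-x)} with hUy_def
  have hUy_open : IsOpen Uy := by
    have hc1 : Continuous (fun x : ℝ => c1 + Real.exp x) := by fun_prop
    have hc2 : Continuous (fun x : ℝ => c2 + Real.exp (-x)) := by fun_prop
    exact (isOpen_lt continuous_const hc1).inter (isOpen_lt continuous_const hc2)
  have h0 : (0 : ℝ) ∈ Uy := by
    constructor <;> simp [c1, c2, Real.exp_zero, Real.exp_pos]
  set fs : ℕ → ℝ → ℝ := fun j x => hseq β c1 j x with hfs_def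
  set gs : ℕ → ℝ → ℝ := fun k x => (-1 : ℝ) ^ k * hseq α c2 k (-x) with hgs_def
  have hf : ∀ j, ∀ x ∈ Uy, HasDerivAt (fs j) (fs (j+1) x) x := by
    intro j x hx
    exact hseq_hasDerivAt β c1 j hx.1
  have hg : ∀ k, ∀ x ∈ Uy, HasDerivAt (gs k) (gs (k+1) x) x := by
    intro k x hx
    have hbase : HasDerivAt (hseq α c2 k) (hseq α c2 (k+1) (-x)) (-x) :=
      hseq_hasDerivAt α c2 k hx.2
    have hneg : HasDerivAt (fun x : ℝ => -x) (-1) x := by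
      exact hasDerivAt_neg (x := x)
    have hcomp := hbase.comp x hneg
    have := hcomp.const_mul ((-1 : ℝ) ^ k)
    have heq : (-1 : ℝ) ^ k * (hseq α c2 (k+1) (-x) * -1) = (-1 : ℝ) ^ (k+1) * hseq α c2 (k+1) (-x) := by
      rw [pow_succ]; ring
    rw [heq] at this
    exact this
  have hchain : ∀ m', ∀ x ∈ Uy, HasDerivAt
      (fun x => ∑ j ∈ Finset.range (m' + 1), (m'.choose j : ℝ) * (fs j x * gs (m' - j) x))
      (∑ j ∈ Finset.range (m' + 2), ((m' + 1).choose j : ℝ) * (fs j x * gs (m' + 1 - j) x)) x :=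
    fun m' => leibniz_chain hf hg m'
  have key := iteratedDeriv_of_chain hUy_open
    (F := fun m' x => ∑ j ∈ Finset.range (m' + 1), (m'.choose j : ℝ) * (fs j x * gs (m' - j) x))
    (fun m' x hx => hchain m' x hx) m 0 h0
  have hF0 : (fun x : ℝ => Fn t (x, y)) =
      (fun x => ∑ j ∈ Finset.range (0 + 1), ((0 : ℕ).choose j : ℝ) * (fs j x * gs (0 - j) x)) := by
    funext x
    rw [Finset.sum_range_one]
    show Fn t (x, y) = ((0:ℕ).choose 0 : ℝ) * (hseq β c1 0 x * ((-1:ℝ) ^ (0:ℕ) * hseq α c2 0 (-x)))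
    rw [hseq_zeroth, hseq_zeroth]
    show (Real.exp (-x) + Real.exp (-y) - 1) ^ α * (Real.exp x + Real.exp y - 1) ^ β = _
    rw [show c1 + Real.exp x = Real.exp x + Real.exp y - 1 by simp only [c1]; ring,
      show c2 + Real.exp (-x) = Real.exp (-x) + Real.exp (-y) - 1 by simp only [c2]; ring]
    norm_num
    ring
  rw [hF0, key]
  simp only [hfs_def, hgs_def, neg_zero]

noncomputable def Hs (t : ℝ) (m k : ℕ) (y : ℝ) : ℝ :=
  ∑ j ∈ Finset.range (m+1), ∑ l1 ∈ Finset.range (j+1), ∑ l2 ∈ Finset.range (m-j+1),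
    (m.choose j : ℝ) * stirling2 j l1 * stirling2 (m-j) l2 * (-1 : ℝ)^(m-j) *
      fallingFactorial ((1-t)/2) l1 * fallingFactorial ((-1-t)/2) l2 *
      ((((1-t)/2) - l1) - (((-1-t)/2) - l2))^k *
      Real.exp (((((1-t)/2) - l1) - (((-1-t)/2) - l2)) * y)

lemma Hs_hasDerivAt (t : ℝ) (m k : ℕ) (y : ℝ) :
    HasDerivAt (Hs t m k) (Hs t m (k+1) y) y := by
  apply HasDerivAt.fun_sum; intro j _
  apply HasDerivAt.fun_sum; intro l1 _
  apply HasDerivAt.fun_sum; intro l2 _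
  set d : ℝ := (((1-t)/2) - l1) - (((-1-t)/2) - l2) with hd
  set C : ℝ := (m.choose j : ℝ) * stirling2 j l1 * stirling2 (m-j) l2 * (-1 : ℝ)^(m-j) *
      fallingFactorial ((1-t)/2) l1 * fallingFactorial ((-1-t)/2) l2 with hC
  have hexp : HasDerivAt (fun y : ℝ => Real.exp (d * y)) (Real.exp (d * y) * d) y := by
    have : HasDerivAt (fun y : ℝ => d * y) d y := by simpa using (hasDerivAt_id y).const_mul d
    exact this.exp
  have := hexp.const_mul (C * d ^ k)
  have hfun : (fun y : ℝ => C * d ^ k * Real.exp (d * y)) = fun y => C * d ^ k * Real.exp (d * y) := rfl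
  convert this using 1
  rfl
  rw [pow_succ]; ring

lemma outer_match (t : ℝ) (m : ℕ) (y : ℝ) :
    (∑ j ∈ Finset.range (m + 1), (m.choose j : ℝ) *
        (hseq ((1 - t)/2) (Real.exp y - 1) j 0 *
          ((-1 : ℝ) ^ (m - j) * hseq ((-1 - t)/2) (Real.exp (-y) - 1) (m - j) 0)))
      = Hs t m 0 y := by
  rw [Hs]
  apply Finset.sum_congr rfl
  intro j _
  rw [hseq_at_zero, hseq_at_zero,
    show Real.exp y - 1 + 1 = Real.exp y by ring,
    show Real.exp (-y) - 1 + 1 = Real.exp (-y) by ring,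
    Finset.mul_sum, Finset.sum_mul_sum, Finset.mul_sum]
  apply Finset.sum_congr rfl
  intro l1 _
  rw [Finset.mul_sum]
  apply Finset.sum_congr rfl
  intro l2 _
  rw [← Real.exp_mul, ← Real.exp_mul, pow_zero]
  have hmerge : Real.exp (y * ((1 - t)/2 - l1)) * Real.exp (-y * ((-1 - t)/2 - l2))
      = Real.exp (((1 - t)/2 - l1 - ((-1 - t)/2 - l2)) * y) := by
    rw [← Real.exp_add]; ring_nf
  linear_combination ((m.choose j : ℝ) * stirling2 j l1 * fallingFactorial ((1 - t)/2) l1 *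
    (-1 : ℝ)^(m - j) * stirling2 (m - j) l2 * fallingFactorial ((-1 - t)/2) l2) * hmerge

lemma Hs_at_zero (t : ℝ) (m n : ℕ) :
    Hs t m n 0 = ∑ m' ∈ Finset.range (m + 1), ∑ l1 ∈ Finset.range (m' + 1),
        ∑ l2 ∈ Finset.range (m - m' + 1),
          (m.choose m' : ℝ) * (stirling2 m' l1 : ℝ) * (stirling2 (m - m') l2 : ℝ) *
            (-1 : ℝ) ^ (m - m') * fallingFactorial ((1 - t) / 2) l1 *
            fallingFactorial ((-1 - t) / 2) l2 * ((1 : ℝ) - l1 + l2) ^ n := by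
  rw [Hs]
  apply Finset.sum_congr rfl; intro j _
  apply Finset.sum_congr rfl; intro l1 _
  apply Finset.sum_congr rfl; intro l2 _
  rw [mul_zero, Real.exp_zero, mul_one,
    show (1 - t)/2 - l1 - ((-1 - t)/2 - l2) = (1 : ℝ) - l1 + l2 by ring]

/-- Closed formula for
`∂_x^m ∂_y^n [(e^{-x} + e^{-y} - 1)^{(-1-t)/2} (e^x + e^y - 1)^{(1-t)/2}]`
at `(x,y) = (0,0)`, where the powers are real powers `a ^ b = exp (b * log a)`. -/
theorem mixed_deriv_product_formula (t : ℝ) (m n : ℕ) :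
    iteratedDeriv m (fun x : ℝ =>
        iteratedDeriv n (fun y : ℝ =>
          (Real.exp (-x) + Real.exp (-y) - 1) ^ ((-1 - t) / 2) *
            (Real.exp x + Real.exp y - 1) ^ ((1 - t) / 2)) 0) 0 =
      ∑ m' ∈ Finset.range (m + 1), ∑ l1 ∈ Finset.range (m' + 1),
        ∑ l2 ∈ Finset.range (m - m' + 1),
          (m.choose m' : ℝ) * (stirling2 m' l1 : ℝ) * (stirling2 (m - m') l2 : ℝ) *
            (-1 : ℝ) ^ (m - m') * fallingFactorial ((1 - t) / 2) l1 *
            fallingFactorial ((-1 - t) / 2) l2 * ((1 : ℝ) - l1 + l2) ^ n := by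
  show iteratedDeriv m (fun x : ℝ => iteratedDeriv n (fun y : ℝ => Fn t (x, y)) 0) 0 = _
  rw [mixed_swap Vset_open (Fn_smooth t) origin_mem_Vset m n]
  have hfun : (fun y : ℝ => iteratedDeriv m (fun x => Fn t (x, y)) 0) = Hs t m 0 :=
    funext fun y => (inner_formula t m y).trans (outer_match t m y)
  rw [hfun,
    iteratedDeriv_of_chain isOpen_univ (fun k y _ => Hs_hasDerivAt t m k y) n 0 (Set.mem_univ 0),
    Hs_at_zero]

end Main
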